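/- Let Γ ⊆ ℕ^{n+1} be a subsemigroup which generates ℤ^{n+1} as a group, and suppose the Okounkov body Δ(Γ) is bounded. Then Δ(Γ) is equal to the topological closure of the union ⋃_{k ≥ 1} Δ_k(Γ). -/

import Mathlib

open Set

/-- The image of a vector of natural numbers in Euclidean space. -/
noncomputable def toR (n : ℕ) (α : Fin (n + 1) → ℕ) : EuclideanSpace ℝ (Fin (n + 1)) :=
  WithLp.toLp 2 (fun i => (α i : ℝ))

/-- The smallest closed convex cone containing a set `S` in `ℝ^{n+1}`. -/
def closedConvexCone (n : ℕ) (S : Set (EuclideanSpace ℝ (Fin (n + 1)))) :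
    Set (EuclideanSpace ℝ (Fin (n + 1))) :=
  ⋂₀ {C | S ⊆ C ∧ IsClosed C ∧ Convex ℝ C ∧ ∀ c : ℝ, 0 ≤ c → ∀ x ∈ C, c • x ∈ C}

/-- The vector `(α, t) ∈ ℝ^{n+1}` obtained from `α ∈ ℝ^n` by appending `t`. -/
noncomputable def embSnoc (n : ℕ) (α : EuclideanSpace ℝ (Fin n)) (t : ℝ) :
    EuclideanSpace ℝ (Fin (n + 1)) :=
  WithLp.toLp 2 (Fin.snoc (show Fin n → ℝ from α) t)

/-- The Okounkov body `Δ(Γ) := {α ∈ ℝ^n : (α,1) ∈ Σ(Γ)}` of a semigroup `Γ ⊆ ℕ^{n+1}`. -/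
def OkounkovBody (n : ℕ) (Γ : Set (Fin (n + 1) → ℕ)) : Set (EuclideanSpace ℝ (Fin n)) :=
  {α | embSnoc n α 1 ∈ closedConvexCone n (toR n '' Γ)}

/-- `Δ_k(Γ) := {α ∈ ℝ^n : (kα, k) ∈ Γ}`. -/
def DeltaK (n : ℕ) (Γ : Set (Fin (n + 1) → ℕ)) (k : ℕ) : Set (EuclideanSpace ℝ (Fin n)) :=
  {α | ∃ a ∈ Γ, toR n a = embSnoc n ((k : ℝ) • α) (k : ℝ)}

lemma embSnoc_castSucc (n : ℕ) (α : EuclideanSpace ℝ (Fin n)) (t : ℝ) (i : Fin n) :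
    embSnoc n α t i.castSucc = α i := by
  simp [embSnoc]
lemma embSnoc_last (n : ℕ) (α : EuclideanSpace ℝ (Fin n)) (t : ℝ) :
    embSnoc n α t (Fin.last n) = t := by
  simp [embSnoc]
lemma embSnoc_smul_add (n : ℕ) (c d : ℝ) (β γ : EuclideanSpace ℝ (Fin n)) (s t : ℝ) :
    c • embSnoc n β s + d • embSnoc n γ t = embSnoc n (c • β + d • γ) (c * s + d * t) := by
  ext i
  refine Fin.lastCases ?_ ?_ i
  · simp [embSnoc, Fin.snoc_last]
  · intro j
    simp [embSnoc, Fin.snoc_castSucc]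
lemma embSnoc_smul (n : ℕ) (c : ℝ) (β : EuclideanSpace ℝ (Fin n)) (s : ℝ) :
    c • embSnoc n β s = embSnoc n (c • β) (c * s) := by
  have := embSnoc_smul_add n c 0 β β s s
  simpa using this

lemma embSnoc_add (n : ℕ) (β γ : EuclideanSpace ℝ (Fin n)) (s t : ℝ) :
    embSnoc n β s + embSnoc n γ t = embSnoc n (β + γ) (s + t) := by
  have := embSnoc_smul_add n 1 1 β γ s t
  simpa using this

lemma embSnoc_inj (n : ℕ) {α β : EuclideanSpace ℝ (Fin n)} {s t : ℝ}
    (h : embSnoc n α s = embSnoc n β t) : α = β ∧ s = t := by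
  constructor
  · ext i
    have := congrFun (congrArg WithLp.ofLp h) i.castSucc
    simpa [embSnoc_castSucc] using this
  · have := congrFun (congrArg WithLp.ofLp h) (Fin.last n)
    simpa [embSnoc_last] using this

noncomputable def snocL (n : ℕ) : EuclideanSpace ℝ (Fin n) →ₗ[ℝ] EuclideanSpace ℝ (Fin (n+1)) where
  toFun α := embSnoc n α 0
  map_add' a b := by rw [embSnoc_add]; norm_num
  map_smul' c a := by simp only [RingHom.id_apply]; rw [embSnoc_smul, mul_zero]

lemma embSnoc_eq (n : ℕ) (α : EuclideanSpace ℝ (Fin n)) (t : ℝ) :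
    embSnoc n α t = snocL n α + t • embSnoc n 0 1 := by
  rw [embSnoc_smul]
  show _ = embSnoc n α 0 + _
  rw [embSnoc_add]
  simp

lemma continuous_embSnoc (n : ℕ) (t : ℝ) : Continuous fun α => embSnoc n α t := by
  have h1 : Continuous (snocL n) := (snocL n).continuous_of_finiteDimensional
  simp only [embSnoc_eq n _ t]
  exact h1.add continuous_const

lemma toR_add (n : ℕ) (a b : Fin (n+1) → ℕ) : toR n (a + b) = toR n a + toR n b := by
  ext i; simp [toR]

lemma toR_nsmul (n : ℕ) (p : ℕ) (a : Fin (n+1) → ℕ) : toR n (p • a) = (p : ℝ) • toR n a := by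
  ext i; simp [toR]


lemma ccc_isClosed (n : ℕ) (S : Set (EuclideanSpace ℝ (Fin (n + 1)))) :
    IsClosed (closedConvexCone n S) :=
  isClosed_sInter fun _ hC => hC.2.1

lemma subset_ccc (n : ℕ) (S : Set (EuclideanSpace ℝ (Fin (n + 1)))) :
    S ⊆ closedConvexCone n S := fun x hx => fun _ hC => hC.1 hx

lemma ccc_smul (n : ℕ) (S : Set (EuclideanSpace ℝ (Fin (n + 1)))) {c : ℝ} (hc : 0 ≤ c)
    {x} (hx : x ∈ closedConvexCone n S) : c • x ∈ closedConvexCone n S :=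
  fun C hC => hC.2.2.2 c hc x (hx C hC)

lemma ccc_add (n : ℕ) (S : Set (EuclideanSpace ℝ (Fin (n + 1))))
    {x y} (hx : x ∈ closedConvexCone n S) (hy : y ∈ closedConvexCone n S) :
    x + y ∈ closedConvexCone n S := by
  intro C hC
  have hm : (1/2 : ℝ) • x + (1/2 : ℝ) • y ∈ C :=
    hC.2.2.1 (hx C hC) (hy C hC) (by norm_num) (by norm_num) (by norm_num)
  have := hC.2.2.2 2 (by norm_num) _ hm
  have h2 : (2:ℝ) • ((1/2 : ℝ) • x + (1/2 : ℝ) • y) = x + y := by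
    rw [smul_add, smul_smul, smul_smul]; norm_num
  rwa [h2] at this


lemma okounkov_closed (n : ℕ) (Γ : Set (Fin (n + 1) → ℕ)) : IsClosed (OkounkovBody n Γ) := by
  have : OkounkovBody n Γ = (fun α => embSnoc n α 1) ⁻¹' closedConvexCone n (toR n '' Γ) := rfl
  rw [this]
  exact (ccc_isClosed n _).preimage (continuous_embSnoc n 1)

lemma deltaK_subset_okounkov (n : ℕ) (Γ : Set (Fin (n + 1) → ℕ)) {k : ℕ} (hk : 1 ≤ k) :
    DeltaK n Γ k ⊆ OkounkovBody n Γ := by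
  rintro α ⟨a, ha, heq⟩
  have hk0 : (k : ℝ) ≠ 0 := Nat.cast_ne_zero.2 (by omega)
  have h1 : toR n a ∈ closedConvexCone n (toR n '' Γ) := subset_ccc n _ ⟨a, ha, rfl⟩
  have h2 := ccc_smul n (toR n '' Γ) (c := (k : ℝ)⁻¹) (by positivity) h1
  rw [heq, embSnoc_smul, smul_smul, inv_mul_cancel₀ hk0, one_smul] at h2
  exact h2

lemma nsmul_mem_semigroup {M : Type*} [AddCommMonoid M] (Γ : AddSubsemigroup M)
    {a : M} (ha : a ∈ Γ) : ∀ p : ℕ, 1 ≤ p → p • a ∈ Γ := by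
  intro p hp
  induction p with
  | zero => omega
  | succ q ih =>
    rcases Nat.eq_or_lt_of_le hp with h | h
    · obtain rfl : q = 0 := by omega
      simpa using ha
    · have hq : 1 ≤ q := by omega
      rw [succ_nsmul]
      exact Γ.add_mem (ih hq) ha

lemma mem_deltaK_self (n : ℕ) (Γ : Set (Fin (n + 1) → ℕ)) {a : Fin (n+1) → ℕ} (ha : a ∈ Γ)
    (hk : 1 ≤ a (Fin.last n)) :
    WithLp.toLp 2 (fun i : Fin n => (a i.castSucc : ℝ) / (a (Fin.last n) : ℝ)) ∈ DeltaK n Γ (a (Fin.last n)) := by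
  refine ⟨a, ha, ?_⟩
  have hk0 : ((a (Fin.last n) : ℝ)) ≠ 0 := Nat.cast_ne_zero.2 (by omega)
  ext i
  refine Fin.lastCases ?_ ?_ i
  · rw [embSnoc_last]; rfl
  · intro j
    rw [embSnoc_castSucc]
    show ((a j.castSucc : ℝ)) = (a (Fin.last n) : ℝ) • ((a j.castSucc : ℝ) / (a (Fin.last n) : ℝ))
    rw [smul_eq_mul]; field_simp

lemma smul_div_combo {E : Type*} [AddCommGroup E] [Module ℝ E] (K a b : ℝ) (hK : K ≠ 0)
    (x y : E) : K • ((a/K) • x + (b/K) • y) = a • x + b • y := by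
  have h1 : K * (a/K) = a := by field_simp
  have h2 : K * (b/K) = b := by field_simp
  rw [smul_add, smul_smul, smul_smul, h1, h2]

lemma deltaK_combo (n : ℕ) (Γ : AddSubsemigroup (Fin (n + 1) → ℕ)) {k m p q : ℕ}
    (hp : 1 ≤ p) (hq : 1 ≤ q)
    {x y : EuclideanSpace ℝ (Fin n)}
    (hx : x ∈ DeltaK n (Γ : Set _) k) (hy : y ∈ DeltaK n (Γ : Set _) m)
    (hk : 1 ≤ k) (hm : 1 ≤ m) :
    (((p*k : ℕ):ℝ)/((p*k+q*m : ℕ):ℝ)) • x + (((q*m : ℕ):ℝ)/((p*k+q*m : ℕ):ℝ)) • y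
      ∈ DeltaK n (Γ : Set _) (p*k+q*m) := by
  obtain ⟨a, ha, hax⟩ := hx
  obtain ⟨b, hb, hby⟩ := hy
  have hc : p • a + q • b ∈ Γ :=
    Γ.add_mem (nsmul_mem_semigroup Γ ha p hp) (nsmul_mem_semigroup Γ hb q hq)
  refine ⟨p • a + q • b, hc, ?_⟩
  have hK0 : ((p*k+q*m : ℕ):ℝ) ≠ 0 := Nat.cast_ne_zero.2 (by positivity)
  rw [toR_add, toR_nsmul, toR_nsmul, hax, hby, embSnoc_smul_add]
  rw [smul_div_combo _ _ _ hK0]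
  congr 1
  rw [← mul_smul, ← mul_smul]
  norm_cast
  push_cast; ring

def TT (n : ℕ) (Γ : Set (Fin (n + 1) → ℕ)) : Set (EuclideanSpace ℝ (Fin n)) :=
  ⋃ k ∈ {k : ℕ | 1 ≤ k}, DeltaK n Γ k

lemma mem_TT {n : ℕ} {Γ : Set (Fin (n + 1) → ℕ)} {α : EuclideanSpace ℝ (Fin n)} :
    α ∈ TT n Γ ↔ ∃ k, 1 ≤ k ∧ α ∈ DeltaK n Γ k := by
  simp [TT]

lemma TT_subset_okounkov (n : ℕ) (Γ : Set (Fin (n + 1) → ℕ)) :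
    TT n Γ ⊆ OkounkovBody n Γ := by
  intro α hα
  obtain ⟨k, hk, hαk⟩ := mem_TT.1 hα
  exact deltaK_subset_okounkov n Γ hk hαk

lemma ceil_div_tendsto (r : ℝ) (hr : 0 ≤ r) :
    Filter.Tendsto (fun N : ℕ => ((⌈r * N⌉₊ : ℝ) / N)) Filter.atTop (nhds r) := by
  have hlo : ∀ᶠ N : ℕ in Filter.atTop, r ≤ (⌈r * N⌉₊ : ℝ) / N := by
    filter_upwards [Filter.eventually_ge_atTop 1] with N hN
    have hN0 : (0:ℝ) < N := by positivity
    rw [le_div_iff₀ hN0]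
    exact Nat.le_ceil _
  have hhi : ∀ᶠ N : ℕ in Filter.atTop, (⌈r * N⌉₊ : ℝ) / N ≤ r + 1 / N := by
    filter_upwards [Filter.eventually_ge_atTop 1] with N hN
    have hN0 : (0:ℝ) < N := by positivity
    rw [div_le_iff₀ hN0, add_mul, one_div, inv_mul_cancel₀ (ne_of_gt hN0)]
    have := Nat.ceil_lt_add_one (by positivity : (0:ℝ) ≤ r * N)
    linarith
  have h1 : Filter.Tendsto (fun _ : ℕ => r) Filter.atTop (nhds r) := tendsto_const_nhds
  have h2 : Filter.Tendsto (fun N : ℕ => r + 1 / N) Filter.atTop (nhds r) := by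
    have := tendsto_one_div_atTop_nhds_zero_nat (𝕜 := ℝ)
    simpa using h1.add this
  exact tendsto_of_tendsto_of_tendsto_of_le_of_le' h1 h2 hlo hhi

lemma segment_mem_closure_TT (n : ℕ) (Γ : AddSubsemigroup (Fin (n + 1) → ℕ)) {k m : ℕ}
    (hk : 1 ≤ k) (hm : 1 ≤ m) {x y : EuclideanSpace ℝ (Fin n)}
    (hx : x ∈ DeltaK n (Γ : Set _) k) (hy : y ∈ DeltaK n (Γ : Set _) m)
    {c : ℝ} (hc0 : 0 ≤ c) (hc1 : c ≤ 1) :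
    c • x + (1 - c) • y ∈ closure (TT n (Γ : Set _)) := by
  rcases eq_or_lt_of_le hc0 with h0 | h0
  · have : c • x + (1-c) • y = y := by rw [← h0]; simp
    rw [this]
    exact subset_closure (mem_TT.2 ⟨m, hm, hy⟩)
  rcases eq_or_lt_of_le hc1 with h1 | h1
  · have : c • x + (1-c) • y = x := by rw [h1]; simp
    rw [this]
    exact subset_closure (mem_TT.2 ⟨k, hk, hx⟩)
  -- main case 0 < c < 1
  set r : ℝ := c * m / ((1 - c) * k) with hr
  have hc1' : 0 < 1 - c := by linarith
  have hrpos : 0 < r := by positivity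
  set p : ℕ → ℕ := fun N => ⌈r * N⌉₊ with hp
  set w : ℕ → ℝ := fun N => ((p N * k : ℕ) : ℝ) / ((p N * k + N * m : ℕ) : ℝ) with hw
  -- membership
  have hmemb : ∀ N : ℕ, 1 ≤ N → w N • x + (1 - w N) • y ∈ TT n (Γ : Set _) := by
    intro N hN
    have hpN : 1 ≤ p N := by
      rw [hp]
      have : (0:ℝ) < r * N := by positivity
      exact Nat.one_le_iff_ne_zero.2 (by positivity)
    have hKpos : 1 ≤ p N * k + N * m := by nlinarith
    have hK0 : ((p N * k + N * m : ℕ) : ℝ) ≠ 0 := Nat.cast_ne_zero.2 (by omega)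
    have h1w : 1 - w N = ((N * m : ℕ) : ℝ) / ((p N * k + N * m : ℕ) : ℝ) := by
      rw [hw, one_sub_div hK0]
      congr 1
      push_cast
      ring
    rw [h1w]
    refine mem_TT.2 ⟨p N * k + N * m, hKpos, ?_⟩
    exact deltaK_combo n Γ hpN hN hx hy hk hm
  -- tendsto
  have hf : Filter.Tendsto (fun N : ℕ => ((p N : ℝ) / N)) Filter.atTop (nhds r) :=
    ceil_div_tendsto r (le_of_lt hrpos)
  have hwt : Filter.Tendsto w Filter.atTop (nhds c) := by
    have hden : r * k + m ≠ 0 := by positivity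
    have hnum : Filter.Tendsto (fun N : ℕ => ((p N : ℝ)/N) * k) Filter.atTop (nhds (r * k)) :=
      hf.mul_const _
    have hden' : Filter.Tendsto (fun N : ℕ => ((p N : ℝ)/N) * k + m) Filter.atTop
        (nhds (r * k + m)) := hnum.add_const _
    have hdiv := hnum.div hden' hden
    have heq : ∀ᶠ N : ℕ in Filter.atTop,
        ((p N : ℝ)/N) * k / (((p N : ℝ)/N) * k + m) = w N := by
      filter_upwards [Filter.eventually_ge_atTop 1] with N hN
      have hN0 : ((N:ℝ)) ≠ 0 := by positivity
      rw [hw]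
      push_cast
      rw [div_eq_div_iff]
      · field_simp
      · have h1 : (0:ℝ) < (p N : ℝ)/N * k + m := by
          have : (0:ℝ) ≤ (p N : ℝ)/N * k := by positivity
          have : (0:ℝ) < (m:ℝ) := by exact_mod_cast hm
          linarith
        linarith
      · have hb : (0:ℝ) < (N:ℝ) * m := by
          have : (0:ℝ) < (m:ℝ) := by exact_mod_cast Nat.lt_of_lt_of_le Nat.zero_lt_one hm
          positivity
        have ha : (0:ℝ) ≤ (p N : ℝ) * k := by positivity
        linarith
    have hrc : r * k / (r * k + m) = c := by
      rw [hr]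
      have hk0 : ((k:ℝ)) ≠ 0 := by
        exact_mod_cast Nat.one_le_iff_ne_zero.1 hk
      have hm0 : ((m:ℝ)) ≠ 0 := by
        exact_mod_cast Nat.one_le_iff_ne_zero.1 hm
      field_simp
      ring
    rw [← hrc]
    exact hdiv.congr' heq
  -- conclude
  have hzt : Filter.Tendsto (fun N => w N • x + (1 - w N) • y) Filter.atTop
      (nhds (c • x + (1 - c) • y)) := by
    have h1 : Filter.Tendsto (fun N => w N • x) Filter.atTop (nhds (c • x)) :=
      hwt.smul_const x
    have h2 : Filter.Tendsto (fun N => (1 - w N) • y) Filter.atTop (nhds ((1 - c) • y)) :=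
      ((tendsto_const_nhds (x := (1:ℝ))).sub hwt).smul_const y
    exact h1.add h2
  refine mem_closure_of_tendsto hzt ?_
  filter_upwards [Filter.eventually_ge_atTop 1] with N hN
  exact hmemb N hN

lemma convex_closure_TT (n : ℕ) (Γ : AddSubsemigroup (Fin (n + 1) → ℕ)) :
    Convex ℝ (closure (TT n (Γ : Set _))) := by
  intro x hx y hy a b ha hb hab
  obtain ⟨u, hu, hux⟩ := mem_closure_iff_seq_limit.1 hx
  obtain ⟨v, hv, hvy⟩ := mem_closure_iff_seq_limit.1 hy
  have hb' : b = 1 - a := by linarith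
  subst hb'
  have hmem : ∀ N, a • u N + (1 - a) • v N ∈ closure (TT n (Γ : Set _)) := by
    intro N
    obtain ⟨k, hk, hku⟩ := mem_TT.1 (hu N)
    obtain ⟨m, hm, hmv⟩ := mem_TT.1 (hv N)
    exact segment_mem_closure_TT n Γ hk hm hku hmv ha (by linarith)
  have ht : Filter.Tendsto (fun N => a • u N + (1 - a) • v N) Filter.atTop
      (nhds (a • x + (1 - a) • y)) :=
    ((hux.const_smul a).add (hvy.const_smul (1 - a)) : _)
  exact isClosed_closure.mem_of_tendsto ht (Filter.Eventually.of_forall hmem)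

lemma exists_last_pos (n : ℕ) (Γ : AddSubsemigroup (Fin (n + 1) → ℕ))
    (hgen : AddSubgroup.closure
      ((fun α : Fin (n + 1) → ℕ => fun i => (α i : ℤ)) '' (Γ : Set (Fin (n + 1) → ℕ))) = ⊤) :
    ∃ g ∈ Γ, 1 ≤ g (Fin.last n) := by
  by_contra h
  push_neg at h
  have hz : ∀ g ∈ Γ, g (Fin.last n) = 0 := fun g hg => by
    have := h g hg; omega
  let f : ((Fin (n + 1)) → ℤ) →+ ℤ := Pi.evalAddMonoidHom (fun _ => ℤ) (Fin.last n)
  have hsub : ((fun α : Fin (n + 1) → ℕ => fun i => (α i : ℤ)) ''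
      (Γ : Set (Fin (n + 1) → ℕ))) ⊆ (f.ker : Set ((Fin (n+1)) → ℤ)) := by
    rintro _ ⟨a, ha, rfl⟩
    show ((a (Fin.last n) : ℤ)) = 0
    exact_mod_cast hz a ha
  have hle := (AddSubgroup.closure_le f.ker).2 hsub
  rw [hgen] at hle
  have h1 : (fun _ : Fin (n+1) => (1:ℤ)) ∈ f.ker := hle (AddSubgroup.mem_top _)
  have : (1 : ℤ) = 0 := h1
  omega

lemma norm_le_of_bdd {E : Type*} [NormedAddCommGroup E] {s : Set E}
    (h : Bornology.IsBounded s) : ∃ R : ℝ, ∀ y ∈ s, ‖y‖ ≤ R :=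
  h.exists_norm_le.imp fun _ hR y hy => hR y hy

lemma last_zero (n : ℕ) (Γ : AddSubsemigroup (Fin (n + 1) → ℕ))
    (hgen : AddSubgroup.closure
      ((fun α : Fin (n + 1) → ℕ => fun i => (α i : ℤ)) '' (Γ : Set (Fin (n + 1) → ℕ))) = ⊤)
    (hbdd : Bornology.IsBounded (OkounkovBody n (Γ : Set (Fin (n + 1) → ℕ))))
    {v : Fin (n+1) → ℕ} (hv : v ∈ Γ) (h0 : v (Fin.last n) = 0) : ∀ i, v i = 0 := by
  by_contra hne
  push_neg at hne
  obtain ⟨j, hj⟩ := hne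
  have hjne : j ≠ Fin.last n := fun h => hj (h ▸ h0)
  obtain ⟨j', rfl⟩ : ∃ j' : Fin n, j = j'.castSucc := by
    rcases Fin.eq_castSucc_or_eq_last j with h | h
    · exact h
    · exact absurd h hjne
  obtain ⟨g, hg, hk⟩ := exists_last_pos n Γ hgen
  set k : ℕ := g (Fin.last n) with hkdef
  set β₀ : EuclideanSpace ℝ (Fin n) := WithLp.toLp 2 (fun i : Fin n => (g i.castSucc : ℝ) / (k : ℝ)) with hβ₀
  have hβ₀mem : β₀ ∈ OkounkovBody n (Γ : Set _) :=
    deltaK_subset_okounkov n _ hk (mem_deltaK_self n _ hg hk)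
  set v' : EuclideanSpace ℝ (Fin n) := WithLp.toLp 2 (fun i : Fin n => (v i.castSucc : ℝ)) with hv'
  have htoRv : toR n v = embSnoc n v' 0 := by
    ext i
    refine Fin.lastCases ?_ ?_ i
    · rw [embSnoc_last]
      show ((v (Fin.last n) : ℝ)) = 0
      exact_mod_cast h0
    · intro i
      rw [embSnoc_castSucc]
      rfl
  have hmem : ∀ s : ℕ, β₀ + (s : ℝ) • v' ∈ OkounkovBody n (Γ : Set _) := by
    intro s
    have h1 : embSnoc n β₀ 1 ∈ closedConvexCone n (toR n '' (Γ : Set _)) := hβ₀mem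
    have h2 : (s:ℝ) • toR n v ∈ closedConvexCone n (toR n '' (Γ : Set _)) :=
      ccc_smul n _ (by positivity) (subset_ccc n _ ⟨v, hv, rfl⟩)
    have h3 := ccc_add n _ h1 h2
    have heq : embSnoc n β₀ 1 + (s:ℝ) • toR n v = embSnoc n (β₀ + (s:ℝ) • v') 1 := by
      rw [htoRv]
      have := embSnoc_smul_add n 1 (s:ℝ) β₀ v' 1 0
      simpa using this
    rwa [heq] at h3
  obtain ⟨R, hR⟩ := norm_le_of_bdd hbdd
  have hv'0 : v' ≠ 0 := by
    intro h
    have := congrArg (fun w : EuclideanSpace ℝ (Fin n) => w j') h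
    rw [hv'] at this
    simp at this
    omega
  have hv'pos : (0:ℝ) < ‖v'‖ := norm_pos_iff.2 hv'0
  set s : ℕ := ⌈(R + ‖β₀‖ + 1) / ‖v'‖⌉₊ with hs
  have hle := hR _ (hmem s)
  have h4 : (R + ‖β₀‖ + 1) / ‖v'‖ ≤ (s : ℝ) := Nat.le_ceil _
  have h5 : R + ‖β₀‖ + 1 ≤ (s : ℝ) * ‖v'‖ := by
    rw [div_le_iff₀ hv'pos] at h4
    linarith
  have h6 : (s:ℝ) * ‖v'‖ - ‖β₀‖ ≤ ‖β₀ + (s:ℝ) • v'‖ := by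
    have h7 : ‖(s:ℝ) • v'‖ = (s:ℝ) * ‖v'‖ := by
      simp [norm_smul]
    have h8 : ‖(s:ℝ) • v'‖ ≤ ‖β₀ + (s:ℝ) • v'‖ + ‖β₀‖ := by
      have h9 := norm_sub_le (β₀ + (s:ℝ) • v') β₀
      have h10 : (β₀ + (s:ℝ) • v') - β₀ = (s:ℝ) • v' := by abel
      rwa [h10] at h9
    linarith
  linarith

lemma toR_eq_smul_embSnoc (n : ℕ) (a : Fin (n+1) → ℕ) (h : 1 ≤ a (Fin.last n)) :
    toR n a = ((a (Fin.last n) : ℝ)) •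
      embSnoc n (WithLp.toLp 2 (fun i : Fin n => (a i.castSucc : ℝ) / (a (Fin.last n) : ℝ))) 1 := by
  have hk0 : ((a (Fin.last n) : ℝ)) ≠ 0 := Nat.cast_ne_zero.2 (by omega)
  rw [embSnoc_smul, mul_one]
  ext i
  refine Fin.lastCases ?_ ?_ i
  · rw [embSnoc_last]; rfl
  · intro j
    rw [embSnoc_castSucc]
    show ((a j.castSucc : ℝ)) = (a (Fin.last n) : ℝ) • ((a j.castSucc : ℝ) / (a (Fin.last n) : ℝ))
    rw [smul_eq_mul]; field_simp

def coneD (n : ℕ) (K : Set (EuclideanSpace ℝ (Fin n))) : Set (EuclideanSpace ℝ (Fin (n+1))) :=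
  {x | ∃ t : ℝ, 0 ≤ t ∧ ∃ β ∈ K, x = t • embSnoc n β 1}

lemma coneD_isClosed (n : ℕ) {K : Set (EuclideanSpace ℝ (Fin n))} (hKcomp : IsCompact K) :
    IsClosed (coneD n K) := by
  apply IsSeqClosed.isClosed
  intro u x hu hux
  choose t ht β hβ heq using hu
  obtain ⟨β', hβ'K, φ, hφ, hβφ⟩ := hKcomp.tendsto_subseq hβ
  have htn : ∀ N, t N = u N (Fin.last n) := by
    intro N
    rw [heq N, embSnoc_smul, embSnoc_last, mul_one]
  have hts : Filter.Tendsto (fun N => t (φ N)) Filter.atTop (nhds (x (Fin.last n))) := by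
    have hcont := (EuclideanSpace.proj (𝕜 := ℝ) (Fin.last n)).continuous
    have h1 : Filter.Tendsto (fun N => u (φ N) (Fin.last n)) Filter.atTop
        (nhds (x (Fin.last n))) :=
      (hcont.tendsto x).comp (hux.comp hφ.tendsto_atTop)
    exact h1.congr (fun N => (htn (φ N)).symm)
  have hs0 : 0 ≤ x (Fin.last n) := le_of_tendsto_of_tendsto' tendsto_const_nhds hts
    (fun N => ht (φ N))
  have hlim : Filter.Tendsto (fun N => t (φ N) • embSnoc n (β (φ N)) 1) Filter.atTop
      (nhds (x (Fin.last n) • embSnoc n β' 1)) :=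
    hts.smul (((continuous_embSnoc n 1).tendsto β').comp hβφ)
  have hlim2 : Filter.Tendsto (fun N => t (φ N) • embSnoc n (β (φ N)) 1) Filter.atTop
      (nhds x) := by
    have h2 : (fun N => t (φ N) • embSnoc n (β (φ N)) 1) = fun N => u (φ N) :=
      funext fun N => (heq (φ N)).symm
    rw [h2]
    exact hux.comp hφ.tendsto_atTop
  exact ⟨x (Fin.last n), hs0, β', hβ'K, tendsto_nhds_unique hlim2 hlim⟩

lemma coneD_convex (n : ℕ) {K : Set (EuclideanSpace ℝ (Fin n))} (hKconv : Convex ℝ K) :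
    Convex ℝ (coneD n K) := by
  rintro x₁ ⟨t₁, ht₁, β₁, hβ₁, rfl⟩ x₂ ⟨t₂, ht₂, β₂, hβ₂, rfl⟩ a b ha hb hab
  by_cases hs : a * t₁ + b * t₂ = 0
  · have h1 : a * t₁ = 0 := by nlinarith
    have h2 : b * t₂ = 0 := by nlinarith
    refine ⟨0, le_refl _, β₁, hβ₁, ?_⟩
    rw [zero_smul, smul_smul, smul_smul, h1, h2, zero_smul, zero_smul, add_zero]
  · have hspos : 0 < a * t₁ + b * t₂ := lt_of_le_of_ne (by positivity) (Ne.symm hs)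
    have hβmem : (a * t₁ / (a * t₁ + b * t₂)) • β₁ + (b * t₂ / (a * t₁ + b * t₂)) • β₂ ∈ K := by
      refine hKconv hβ₁ hβ₂ (by positivity) (by positivity) ?_
      field_simp
    refine ⟨a * t₁ + b * t₂, le_of_lt hspos, _, hβmem, ?_⟩
    have he : embSnoc n ((a * t₁ / (a * t₁ + b * t₂)) • β₁ +
        (b * t₂ / (a * t₁ + b * t₂)) • β₂) 1 =
        (a * t₁ / (a * t₁ + b * t₂)) • embSnoc n β₁ 1 +
        (b * t₂ / (a * t₁ + b * t₂)) • embSnoc n β₂ 1 := by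
      rw [embSnoc_smul_add]
      congr 1
      field_simp
    rw [he, smul_div_combo _ _ _ hs, smul_smul, smul_smul]

lemma coneD_smul (n : ℕ) (K : Set (EuclideanSpace ℝ (Fin n))) :
    ∀ c : ℝ, 0 ≤ c → ∀ x ∈ coneD n K, c • x ∈ coneD n K := by
  rintro c hc x ⟨t, htn, β, hβ, rfl⟩
  exact ⟨c * t, by positivity, β, hβ, by rw [smul_smul]⟩

lemma okounkov_subset_closure_TT (n : ℕ) (Γ : AddSubsemigroup (Fin (n + 1) → ℕ))
    (hgen : AddSubgroup.closure
      ((fun α : Fin (n + 1) → ℕ => fun i => (α i : ℤ)) '' (Γ : Set (Fin (n + 1) → ℕ))) = ⊤)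
    (hbdd : Bornology.IsBounded (OkounkovBody n (Γ : Set (Fin (n + 1) → ℕ)))) :
    OkounkovBody n (Γ : Set (Fin (n + 1) → ℕ)) ⊆
      closure (TT n (Γ : Set (Fin (n + 1) → ℕ))) := by
  obtain ⟨g, hg, hkg⟩ := exists_last_pos n Γ hgen
  have hβ₀K : (WithLp.toLp 2 (fun i : Fin n => (g i.castSucc : ℝ) / (g (Fin.last n) : ℝ)) :
      EuclideanSpace ℝ (Fin n)) ∈ closure (TT n (Γ : Set (Fin (n + 1) → ℕ))) :=
    subset_closure (mem_TT.2 ⟨g (Fin.last n), hkg, mem_deltaK_self n _ hg hkg⟩)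
  have hKconv : Convex ℝ (closure (TT n (Γ : Set (Fin (n + 1) → ℕ)))) := convex_closure_TT n Γ
  have hKcomp : IsCompact (closure (TT n (Γ : Set (Fin (n + 1) → ℕ)))) :=
    (hbdd.subset (TT_subset_okounkov n (Γ : Set (Fin (n + 1) → ℕ)))).isCompact_closure
  have hDsub : toR n '' (Γ : Set (Fin (n + 1) → ℕ)) ⊆
      coneD n (closure (TT n (Γ : Set (Fin (n + 1) → ℕ)))) := by
    rintro _ ⟨a, ha, rfl⟩
    by_cases hlast : 1 ≤ a (Fin.last n)
    · refine ⟨(a (Fin.last n) : ℝ), by positivity,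
        (WithLp.toLp 2 (fun i : Fin n => (a i.castSucc : ℝ) / (a (Fin.last n) : ℝ))), ?_, ?_⟩
      · exact subset_closure (mem_TT.2 ⟨a (Fin.last n), hlast, mem_deltaK_self n _ ha hlast⟩)
      · exact toR_eq_smul_embSnoc n a hlast
    · have h0 : a (Fin.last n) = 0 := by omega
      have hz := last_zero n Γ hgen hbdd ha h0
      refine ⟨0, le_refl _, _, hβ₀K, ?_⟩
      rw [zero_smul]
      ext i
      show ((a i : ℝ)) = 0
      rw [hz i]; simp
  have hccc : closedConvexCone n (toR n '' (Γ : Set (Fin (n + 1) → ℕ))) ⊆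
      coneD n (closure (TT n (Γ : Set (Fin (n + 1) → ℕ)))) :=
    sInter_subset_of_mem ⟨hDsub, coneD_isClosed n hKcomp, coneD_convex n hKconv, coneD_smul n _⟩
  intro α hα
  obtain ⟨t, htn, β, hβ, heq⟩ := hccc hα
  rw [embSnoc_smul] at heq
  obtain ⟨h1, h2⟩ := embSnoc_inj n heq
  rw [mul_one] at h2
  rw [h1, ← h2, one_smul]
  exact hβ

/-- If `Γ ⊆ ℕ^{n+1}` generates `ℤ^{n+1}` as a group and `Δ(Γ)` is bounded, then
`Δ(Γ)` equals the closure of `⋃_{k ≥ 1} Δ_k(Γ)`. -/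
theorem okounkovBody_eq_closure_iUnion (n : ℕ) (Γ : AddSubsemigroup (Fin (n + 1) → ℕ))
    (hgen : AddSubgroup.closure
      ((fun α : Fin (n + 1) → ℕ => fun i => (α i : ℤ)) '' (Γ : Set (Fin (n + 1) → ℕ))) = ⊤)
    (hbdd : Bornology.IsBounded (OkounkovBody n (Γ : Set (Fin (n + 1) → ℕ)))) :
    OkounkovBody n (Γ : Set (Fin (n + 1) → ℕ)) =
      closure (⋃ k ∈ {k : ℕ | 1 ≤ k}, DeltaK n (Γ : Set (Fin (n + 1) → ℕ)) k) := by
  apply Set.Subset.antisymm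
  · exact okounkov_subset_closure_TT n Γ hgen hbdd
  · exact closure_minimal (TT_subset_okounkov n _) (okounkov_closed n _)
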